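/- Fix N > 0. Let S, I, R : J → ℝ and S', I', R' : J → ℝ be differentiable on an open interval J and satisfy the basic SIR equations Ṡ = −βSI/N, İ = βSI/N − γI, Ṙ = γI with parameters (β, γ), and the same equations with parameters (β', γ'), respectively. Assume β > 0, β' > 0, and for all t ∈ J: I(t) = I'(t) > 0, S(t) > 0 and S'(t) > 0. If the two solutions produce the same output y = I on J, then β = β', γ = γ', and S(t) = S'(t) for all t ∈ J. (That is, in the basic SIR model with known total population N and measured output I, the transmission rate β and recovery rate γ are structurally identifiable and the susceptible state S is observable.) -/

import Mathlib

/-- In the basic SIR model 6 (Zheng) with known total population `N` and measured output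
`y = I`, the parameters `β` and `γ` are structurally identifiable and the state `S` is
observable: any two solutions of `Ṡ = −βSI/N`, `İ = βSI/N − γI`, `Ṙ = γI` on the open
interval `(a, b)` with positive transmission rates, equal positive infected trajectories
and positive susceptible trajectories must share `β`, `γ` and `S`. -/
theorem sir6_beta_gamma_identifiable_S_observable
    (N β γ β' γ' a b : ℝ) (hN : 0 < N) (hab : a < b)
    (hβ : 0 < β) (hβ' : 0 < β')
    (S I R S' I' R' : ℝ → ℝ)
    (hS : ∀ t ∈ Set.Ioo a b, HasDerivAt S (-β * S t * I t / N) t)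
    (hI : ∀ t ∈ Set.Ioo a b, HasDerivAt I (β * S t * I t / N - γ * I t) t)
    (hR : ∀ t ∈ Set.Ioo a b, HasDerivAt R (γ * I t) t)
    (hS' : ∀ t ∈ Set.Ioo a b, HasDerivAt S' (-β' * S' t * I' t / N) t)
    (hI' : ∀ t ∈ Set.Ioo a b, HasDerivAt I' (β' * S' t * I' t / N - γ' * I' t) t)
    (hR' : ∀ t ∈ Set.Ioo a b, HasDerivAt R' (γ' * I' t) t)
    (hout : ∀ t ∈ Set.Ioo a b, I t = I' t)
    (hIpos : ∀ t ∈ Set.Ioo a b, 0 < I t)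
    (hSpos : ∀ t ∈ Set.Ioo a b, 0 < S t)
    (hSpos' : ∀ t ∈ Set.Ioo a b, 0 < S' t) :
    β = β' ∧ γ = γ' ∧ ∀ t ∈ Set.Ioo a b, S t = S' t := by
  have hJ : IsOpen (Set.Ioo a b) := isOpen_Ioo
  have hNne : (N : ℝ) ≠ 0 := hN.ne'
  -- Step 1: βS/N - γ = β'S'/N - γ' on J
  have key1 : ∀ t ∈ Set.Ioo a b, β * S t / N - γ = β' * S' t / N - γ' := by
    intro t ht
    have h2 : HasDerivAt I (β' * S' t * I' t / N - γ' * I' t) t :=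
      (hI' t ht).congr_of_eventuallyEq
        (Filter.eventuallyEq_of_mem (hJ.mem_nhds ht) hout)
    have heq := (hI t ht).unique h2
    have hIt := hIpos t ht
    have hI't := hout t ht
    rw [← hI't] at heq
    have h4 : (β * S t - N * γ) * I t = (β' * S' t - N * γ') * I t := by
      field_simp at heq
      linear_combination (I t) * heq
    have h5 := mul_right_cancel₀ hIt.ne' h4
    field_simp
    linear_combination h5
  -- Step 2: β²S = β'²S' on J
  have key2 : ∀ t ∈ Set.Ioo a b, β ^ 2 * S t = β' ^ 2 * S' t := by
    intro t ht
    set g : ℝ → ℝ := fun s => β * S s / N - β' * S' s / N with hg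
    have hgconst : ∀ s ∈ Set.Ioo a b, g s = γ - γ' := by
      intro s hs
      have := key1 s hs
      simp only [hg]
      linarith
    have hd0 : HasDerivAt g 0 t :=
      (hasDerivAt_const t (γ - γ')).congr_of_eventuallyEq
        (Filter.eventuallyEq_of_mem (hJ.mem_nhds ht) hgconst)
    have hd1 : HasDerivAt g (β * (-β * S t * I t / N) / N - β' * (-β' * S' t * I' t / N) / N) t :=
      (((hS t ht).const_mul β).div_const N).sub (((hS' t ht).const_mul β').div_const N)
    have heq := hd0.unique hd1
    have hIt := hIpos t ht
    have hI't := hout t ht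
    rw [← hI't] at heq
    have h4 : ((β ^ 2 * S t) * I t) * (N * N) = ((β' ^ 2 * S' t) * I t) * (N * N) := by
      field_simp at heq
      linear_combination (N * N) * heq
    have h3 := mul_right_cancel₀ (mul_pos hN hN).ne' h4
    exact mul_right_cancel₀ hIt.ne' h3
  -- Step 3: β³S = β'³S' on J
  have key3 : ∀ t ∈ Set.Ioo a b, β ^ 3 * S t = β' ^ 3 * S' t := by
    intro t ht
    set g : ℝ → ℝ := fun s => β ^ 2 * S s - β' ^ 2 * S' s with hg
    have hgconst : ∀ s ∈ Set.Ioo a b, g s = 0 := by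
      intro s hs
      have := key2 s hs
      simp only [hg]
      linarith
    have hd0 : HasDerivAt g 0 t :=
      (hasDerivAt_const t (0 : ℝ)).congr_of_eventuallyEq
        (Filter.eventuallyEq_of_mem (hJ.mem_nhds ht) hgconst)
    have hd1 : HasDerivAt g ((β ^ 2) * (-β * S t * I t / N) - (β' ^ 2) * (-β' * S' t * I' t / N)) t :=
      ((hS t ht).const_mul (β ^ 2)).sub ((hS' t ht).const_mul (β' ^ 2))
    have heq := hd0.unique hd1
    have hIt := hIpos t ht
    have hI't := hout t ht
    rw [← hI't] at heq
    have h4 : ((β ^ 3 * S t) * I t) * N = ((β' ^ 3 * S' t) * I t) * N := by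
      field_simp at heq
      linear_combination N * heq
    have h3 := mul_right_cancel₀ hNne h4
    exact mul_right_cancel₀ hIt.ne' h3
  -- pick a point
  have ht0 : (a + b) / 2 ∈ Set.Ioo a b := ⟨by linarith, by linarith⟩
  set t0 := (a + b) / 2
  have e2 := key2 t0 ht0
  have e3 := key3 t0 ht0
  have hS0 := hSpos t0 ht0
  have hββ' : β = β' := by
    have hpos : 0 < β ^ 2 * S t0 := by positivity
    have : β * (β ^ 2 * S t0) = β' * (β ^ 2 * S t0) := by
      calc β * (β ^ 2 * S t0) = β ^ 3 * S t0 := by ring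
        _ = β' ^ 3 * S' t0 := e3
        _ = β' * (β' ^ 2 * S' t0) := by ring
        _ = β' * (β ^ 2 * S t0) := by rw [← e2]
    exact mul_right_cancel₀ hpos.ne' this
  have hSS : ∀ t ∈ Set.Ioo a b, S t = S' t := by
    intro t ht
    have := key2 t ht
    rw [← hββ'] at this
    have hβ2 : (β : ℝ) ^ 2 ≠ 0 := by positivity
    exact mul_left_cancel₀ hβ2 this
  have hγγ' : γ = γ' := by
    have h1 := key1 t0 ht0
    have h2 := hSS t0 ht0
    rw [hββ', h2] at h1
    linarith
  exact ⟨hββ', hγγ', hSS⟩
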